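/- (Proposition 1, matched-filter case.) Let f be a sigmoidal efficiency function with γ* the unique positive solution of f(γ) = γ f′(γ). Consider K users with channel gains h_k > 0, noise power σ² > 0, processing gain N, matched-filter SIRs γ_k(p) = N p_k h_k² / (N σ² + ∑_{j≠k} p_j h_j²), individual target SIRs γ̃_k > 0, and delay-constrained utilities ũ_k(p) = f(γ_k(p))/p_k if γ_k(p) ≥ γ̃_k (and p_k > 0), ũ_k(p) = 0 otherwise, with strategy sets (0, P_max]. Set γ̃_k* = max{γ̃_k, γ*} and assume S := ∑_k γ̃_k*/(N + γ̃_k*) < 1 and that the powers p_k* = (1/h_k²) · N γ̃_k* σ² / ((N + γ̃_k*)(1 − S)) satisfy p_k* ≤ P_max for all k. Then the power profile (p₁*,…,p_K*) — at which every user k attains output SIR γ̃_k* — is a Nash equilibrium of the game (no user can strictly increase its own ũ_k by unilaterally changing its power within (0, P_max]), and it is the unique such Nash equilibrium. -/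

import Mathlib

open Finset Classical

/-- Matched-filter output SIR of user `k` at power profile `p`:
`γ_k(p) = N p_k h_k² / (N σ² + ∑_{j≠k} p_j h_j²)`. -/
noncomputable def mfSIR (K : ℕ) (N σ : ℝ) (h : Fin K → ℝ) (p : Fin K → ℝ)
    (k : Fin K) : ℝ :=
  N * p k * (h k) ^ 2 / (N * σ ^ 2 + ∑ j ∈ univ.erase k, p j * (h j) ^ 2)

/-- Delay-constrained utility of user `k`: `f(γ_k(p))/p_k` if `p_k > 0` and
`γ_k(p) ≥ γ̃_k`, and `0` otherwise. -/
noncomputable def dcUtil (K : ℕ) (N σ : ℝ) (h : Fin K → ℝ) (f : ℝ → ℝ)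
    (γt : Fin K → ℝ) (p : Fin K → ℝ) (k : Fin K) : ℝ :=
  if 0 < p k ∧ γt k ≤ mfSIR K N σ h p k then f (mfSIR K N σ h p k) / p k else 0

/-- Nash equilibrium: every power is in the strategy set `(0, P_max]` and no user can
strictly increase its own utility by unilaterally changing its power within
`(0, P_max]`. -/
def IsNashEq (K : ℕ) (Pmax : ℝ) (u : (Fin K → ℝ) → Fin K → ℝ)
    (p : Fin K → ℝ) : Prop :=
  (∀ k, p k ∈ Set.Ioc 0 Pmax) ∧
  ∀ k, ∀ q ∈ Set.Ioc (0 : ℝ) Pmax, u (Function.update p k q) k ≤ u p k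

/-- The explicit equilibrium power vector for target SIRs `γs`:
`p_k = (1/h_k²) · N γs_k σ² / ((N + γs_k)(1 − ∑_j γs_j/(N + γs_j)))`. -/
noncomputable def eqPower (K : ℕ) (N σ : ℝ) (h : Fin K → ℝ) (γs : Fin K → ℝ)
    (k : Fin K) : ℝ :=
  (1 / (h k) ^ 2) * (N * γs k * σ ^ 2 /
    ((N + γs k) * (1 - ∑ j, γs j / (N + γs j))))


private lemma sig_psi (f f' f'' : ℝ → ℝ)
    (hcontf : ContinuousOn f (Set.Ici 0))
    (hderiv : ∀ x : ℝ, 0 < x → HasDerivAt f (f' x) x)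
    (hcontf' : ContinuousOn f' (Set.Ioi 0))
    (hderiv2 : ∀ x : ℝ, 0 < x → HasDerivAt f' (f'' x) x)
    (hf0 : f 0 = 0)
    (a : ℝ) (ha : 0 < a)
    (hconvex : ∀ x : ℝ, 0 < x → x < a → 0 < f'' x)
    (hconcave : ∀ x : ℝ, a < x → f'' x < 0)
    (g : ℝ) (hg : 0 < g) (hgeq : f g = g * f' g) :
    (∀ x, 0 < x → x < g → f x < x * f' x) ∧ (∀ x, g < x → x * f' x < f x) := by
  -- f' strictly increasing on (0, a]
  have hf'mono : StrictMonoOn f' (Set.Ioc 0 a) := by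
    apply strictMonoOn_of_deriv_pos (convex_Ioc 0 a)
      (hcontf'.mono (fun x hx => hx.1))
    intro x hx
    rw [interior_Ioc] at hx
    rw [(hderiv2 x hx.1).deriv]
    exact hconvex x hx.1 hx.2
  -- convexity step: f x < x f' x on (0, a]
  have step1 : ∀ x, 0 < x → x ≤ a → f x < x * f' x := by
    intro x hx0 hxa
    obtain ⟨c, hc, hcs⟩ := exists_hasDerivAt_eq_slope f f' hx0
      (hcontf.mono (fun y hy => hy.1)) (fun y hy => hderiv y hy.1)
    rw [hf0, sub_zero, sub_zero] at hcs
    have hcx : f' c < f' x :=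
      hf'mono ⟨hc.1, hc.2.le.trans hxa⟩ ⟨hx0, hxa⟩ hc.2
    rw [hcs] at hcx
    calc f x = (f x / x) * x := by field_simp
    _ < f' x * x := by exact mul_lt_mul_of_pos_right hcx hx0
    _ = x * f' x := mul_comm _ _
  have hag : a < g := by
    by_contra hle
    push_neg at hle
    have := step1 g hg hle
    linarith [hgeq]
  -- ψ strictly decreasing on [a, ∞)
  set ψ : ℝ → ℝ := fun x => x * f' x - f x with hψdef
  have hψd : ∀ x : ℝ, 0 < x → HasDerivAt ψ (x * f'' x) x := by
    intro x hx
    have h1 : HasDerivAt (fun y => y * f' y - f y)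
        (1 * f' x + x * f'' x - f' x) x :=
      ((hasDerivAt_id x).mul (hderiv2 x hx)).sub (hderiv x hx)
    convert h1 using 1
    ring
  have hψanti : StrictAntiOn ψ (Set.Ici a) := by
    apply strictAntiOn_of_deriv_neg (convex_Ici a)
    · intro x hx
      exact (hψd x (lt_of_lt_of_le ha hx)).continuousAt.continuousWithinAt
    · intro x hx
      rw [interior_Ici] at hx
      have hx0 : 0 < x := ha.trans hx
      rw [(hψd x hx0).deriv]
      exact mul_neg_of_pos_of_neg hx0 (hconcave x hx)
  have hψg : ψ g = 0 := by simp only [hψdef]; linarith [hgeq]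
  constructor
  · intro x hx0 hxg
    by_cases hxa : x ≤ a
    · exact step1 x hx0 hxa
    · push_neg at hxa
      have : ψ g < ψ x := hψanti hxa.le (hxa.trans hxg).le hxg
      rw [hψg] at this
      simp only [hψdef] at this
      linarith
  · intro x hgx
    have : ψ x < ψ g := hψanti hag.le (hag.le.trans hgx.le) hgx
    rw [hψg] at this
    simp only [hψdef] at this
    linarith

private lemma sig_phi_max (f f' f'' : ℝ → ℝ)
    (hcontf : ContinuousOn f (Set.Ici 0))
    (hderiv : ∀ x : ℝ, 0 < x → HasDerivAt f (f' x) x)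
    (hcontf' : ContinuousOn f' (Set.Ioi 0))
    (hderiv2 : ∀ x : ℝ, 0 < x → HasDerivAt f' (f'' x) x)
    (hf0 : f 0 = 0)
    (a : ℝ) (ha : 0 < a)
    (hconvex : ∀ x : ℝ, 0 < x → x < a → 0 < f'' x)
    (hconcave : ∀ x : ℝ, a < x → f'' x < 0)
    (g : ℝ) (hg : 0 < g) (hgeq : f g = g * f' g) :
    ∀ t x : ℝ, 0 < t → 0 < x → t ≤ x → x ≠ max t g →
      f x / x < f (max t g) / max t g := by
  obtain ⟨hpos, hneg⟩ := sig_psi f f' f'' hcontf hderiv hcontf' hderiv2 hf0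
    a ha hconvex hconcave g hg hgeq
  have hφd : ∀ x : ℝ, 0 < x →
      HasDerivAt (fun y => f y / y) ((x * f' x - f x) / x ^ 2) x := by
    intro x hx
    have h1 : HasDerivAt (fun y => f y / y)
        ((f' x * x - f x * 1) / x ^ 2) x :=
      (hderiv x hx).div (hasDerivAt_id x) (ne_of_gt hx)
    convert h1 using 1
    ring
  have hmono : StrictMonoOn (fun y => f y / y) (Set.Ioc 0 g) := by
    apply strictMonoOn_of_deriv_pos (convex_Ioc 0 g)
    · intro x hx
      exact (hφd x hx.1).continuousAt.continuousWithinAt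
    · intro x hx
      rw [interior_Ioc] at hx
      rw [(hφd x hx.1).deriv]
      have := hpos x hx.1 hx.2
      have hx2 : (0:ℝ) < x ^ 2 := pow_pos hx.1 2
      exact div_pos (by linarith) hx2
  have hanti : StrictAntiOn (fun y => f y / y) (Set.Ici g) := by
    apply strictAntiOn_of_deriv_neg (convex_Ici g)
    · intro x hx
      exact (hφd x (hg.trans_le hx)).continuousAt.continuousWithinAt
    · intro x hx
      rw [interior_Ici] at hx
      have hx0 : 0 < x := hg.trans hx
      rw [(hφd x hx0).deriv]
      have := hneg x hx
      have hx2 : (0:ℝ) < x ^ 2 := pow_pos hx0 2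
      exact div_neg_of_neg_of_pos (by linarith) hx2
  intro t x ht hx htx hne
  rcases lt_trichotomy x (max t g) with hlt | heq | hgt
  · have hm : max t g = g := by
      rcases le_or_gt g t with hgt' | hlt'
      · exfalso; rw [max_eq_left hgt'] at hlt; linarith
      · exact max_eq_right hlt'.le
    rw [hm] at hlt ⊢
    exact hmono ⟨hx, hlt.le⟩ ⟨hg, le_refl g⟩ hlt
  · exact absurd heq hne
  · have hgm : g ≤ max t g := le_max_right t g
    exact hanti hgm (hgm.trans hgt.le) hgt

private lemma sig_f_pos (f f' : ℝ → ℝ)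
    (hcontf : ContinuousOn f (Set.Ici 0))
    (hderiv : ∀ x : ℝ, 0 < x → HasDerivAt f (f' x) x)
    (hf0 : f 0 = 0)
    (hf'pos : ∀ x : ℝ, 0 < x → 0 < f' x) :
    ∀ x : ℝ, 0 < x → 0 < f x := by
  intro x hx
  obtain ⟨c, hc, hcs⟩ := exists_hasDerivAt_eq_slope f f' hx
    (hcontf.mono (fun y hy => hy.1)) (fun y hy => hderiv y hy.1)
  rw [hf0, sub_zero, sub_zero] at hcs
  have h1 : 0 < f x / x := by rw [← hcs]; exact hf'pos c hc.1
  have h2 := mul_pos h1 hx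
  rwa [div_mul_cancel₀ _ (ne_of_gt hx)] at h2

set_option maxHeartbeats 2000000

/-- Proposition 1, matched-filter case: under the stated feasibility
conditions, the power profile `p*` at which every user `k` attains output SIR
`γ̃*_k = max{γ̃_k, γ*}` is a Nash equilibrium of the delay-constrained power control
game, and it is the unique Nash equilibrium. -/
theorem nash_equilibrium_exists_unique (f f' f'' : ℝ → ℝ)
    (hcontf : ContinuousOn f (Set.Ici 0))
    (hderiv : ∀ x : ℝ, 0 < x → HasDerivAt f (f' x) x)
    (hcontf' : ContinuousOn f' (Set.Ioi 0))
    (hderiv2 : ∀ x : ℝ, 0 < x → HasDerivAt f' (f'' x) x)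
    (hf0 : f 0 = 0)
    (hf'pos : ∀ x : ℝ, 0 < x → 0 < f' x)
    (hrange : ∀ x : ℝ, 0 ≤ x → 0 ≤ f x ∧ f x < 1)
    (hlim : Filter.Tendsto f Filter.atTop (nhds 1))
    (a : ℝ) (ha : 0 < a)
    (hconvex : ∀ x : ℝ, 0 < x → x < a → 0 < f'' x)
    (hconcave : ∀ x : ℝ, a < x → f'' x < 0)
    (g : ℝ) (hg : 0 < g) (hgeq : f g = g * f' g)
    (hguniq : ∀ g' : ℝ, 0 < g' → f g' = g' * f' g' → g' = g)
    (K : ℕ) (N σ : ℝ) (hN : 1 ≤ N) (hσ : 0 < σ)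
    (h : Fin K → ℝ) (hh : ∀ k, 0 < h k)
    (γt : Fin K → ℝ) (hγt : ∀ k, 0 < γt k)
    (Pmax : ℝ) (hPmax : 0 < Pmax)
    (hS : ∑ k, max (γt k) g / (N + max (γt k) g) < 1)
    (hfeas : ∀ k, eqPower K N σ h (fun j => max (γt j) g) k ≤ Pmax) :
    (∀ k, mfSIR K N σ h (eqPower K N σ h (fun j => max (γt j) g)) k
        = max (γt k) g) ∧
    IsNashEq K Pmax (dcUtil K N σ h f γt)
      (eqPower K N σ h (fun j => max (γt j) g)) ∧
    (∀ q : Fin K → ℝ, IsNashEq K Pmax (dcUtil K N σ h f γt) q →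
        q = eqPower K N σ h (fun j => max (γt j) g)) := by
  classical
  set Γ : Fin K → ℝ := fun j => max (γt j) g with hΓdef
  have hΓpos : ∀ j, 0 < Γ j := fun j => lt_of_lt_of_le (hγt j) (le_max_left _ _)
  have hΓγt : ∀ j, γt j ≤ Γ j := fun j => le_max_left _ _
  have hN0 : (0 : ℝ) < N := lt_of_lt_of_le one_pos hN
  have hNΓ : ∀ j, 0 < N + Γ j := fun j => add_pos hN0 (hΓpos j)
  set S : ℝ := ∑ j, Γ j / (N + Γ j) with hSdef
  have hS1 : S < 1 := hS
  have hspos : ∀ j, 0 < Γ j / (N + Γ j) := fun j => div_pos (hΓpos j) (hNΓ j)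
  have hsleS : ∀ j, Γ j / (N + Γ j) ≤ S :=
    fun j => Finset.single_le_sum (fun i _ => (hspos i).le) (Finset.mem_univ j)
  have hs1 : ∀ j, Γ j / (N + Γ j) < 1 := fun j => lt_of_le_of_lt (hsleS j) hS1
  have hS0 : 0 < 1 - S := by linarith
  set D : ℝ := N * σ ^ 2 / (1 - S) with hDdef
  have hD : 0 < D := div_pos (mul_pos hN0 (pow_pos hσ 2)) hS0
  set p' : Fin K → ℝ := eqPower K N σ h Γ with hp'def
  have hhne : ∀ j, (h j : ℝ) ≠ 0 := fun j => ne_of_gt (hh j)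
  have hNσD : N * σ ^ 2 = D * (1 - S) := by
    rw [hDdef]; field_simp
  -- power times gain
  have hpt : ∀ j, p' j * h j ^ 2 = Γ j / (N + Γ j) * D := by
    intro j
    simp only [hp'def, eqPower, hDdef]
    rw [← hSdef]
    field_simp [hhne j, ne_of_gt (hNΓ j), ne_of_gt hS0]
  have hp'pos : ∀ j, 0 < p' j := by
    intro j
    have h1 : 0 < p' j * h j ^ 2 := by
      rw [hpt j]; exact mul_pos (hspos j) hD
    nlinarith [pow_pos (hh j) 2]
  have hfeas' : ∀ k, p' k ≤ Pmax := hfeas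
  -- generic SIR formula
  have hSIR : ∀ (p : Fin K → ℝ) (k : Fin K), mfSIR K N σ h p k =
      N * p k * h k ^ 2 / (N * σ ^ 2 + (∑ j, p j * h j ^ 2) - p k * h k ^ 2) := by
    intro p k
    unfold mfSIR
    rw [Finset.sum_erase_eq_sub (Finset.mem_univ k)]
    ring
  have hTp' : ∑ j, p' j * h j ^ 2 = S * D := by
    calc ∑ j, p' j * h j ^ 2 = ∑ j, Γ j / (N + Γ j) * D :=
          Finset.sum_congr rfl (fun j _ => hpt j)
      _ = (∑ j, Γ j / (N + Γ j)) * D := by rw [Finset.sum_mul]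
      _ = S * D := by rw [← hSdef]
  -- Part 1 : SIR at p' equals Γ
  have hsir1 : ∀ k, mfSIR K N σ h p' k = Γ k := by
    intro k
    rw [hSIR, hTp']
    have hden : N * σ ^ 2 + S * D - p' k * h k ^ 2 = D * (N / (N + Γ k)) := by
      rw [hpt k, hDdef]
      field_simp [ne_of_gt (hNΓ k), ne_of_gt hS0]
      ring
    rw [hden]
    have hden0 : D * (N / (N + Γ k)) ≠ 0 :=
      ne_of_gt (mul_pos hD (div_pos hN0 (hNΓ k)))
    rw [div_eq_iff hden0, mul_assoc, hpt k]
    field_simp [ne_of_gt (hNΓ k), ne_of_gt hD]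
  -- update SIR formula
  have hupd : ∀ (p : Fin K → ℝ) (k : Fin K) (x : ℝ),
      mfSIR K N σ h (Function.update p k x) k =
      N * x * h k ^ 2 / (N * σ ^ 2 + ∑ j ∈ univ.erase k, p j * h j ^ 2) := by
    intro p k x
    have hsum : ∑ j ∈ univ.erase k, Function.update p k x j * h j ^ 2
        = ∑ j ∈ univ.erase k, p j * h j ^ 2 :=
      Finset.sum_congr rfl (fun j hj => by
        rw [Function.update_of_ne (Finset.ne_of_mem_erase hj)])
    unfold mfSIR
    rw [Function.update_self, hsum]
  -- interference positivity
  have hIpos : ∀ (p : Fin K → ℝ), (∀ j, 0 ≤ p j) → ∀ k,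
      0 < N * σ ^ 2 + ∑ j ∈ univ.erase k, p j * h j ^ 2 := by
    intro p hp k
    have h1 : 0 ≤ ∑ j ∈ univ.erase k, p j * h j ^ 2 :=
      Finset.sum_nonneg fun j _ => mul_nonneg (hp j) (sq_nonneg _)
    have h2 : 0 < N * σ ^ 2 := mul_pos hN0 (pow_pos hσ 2)
    linarith
  -- key unimodality facts
  have hfΓ : ∀ k, 0 < f (Γ k) :=
    fun k => sig_f_pos f f' hcontf hderiv hf0 hf'pos _ (hΓpos k)
  have hkeylt : ∀ (k : Fin K) (x : ℝ), 0 < x → γt k ≤ x → x ≠ Γ k →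
      f x / x < f (Γ k) / Γ k := by
    intro k x hx hγx hne
    exact sig_phi_max f f' f'' hcontf hderiv hcontf' hderiv2 hf0 a ha hconvex
      hconcave g hg hgeq (γt k) x (hγt k) hx hγx hne
  have hkey : ∀ (k : Fin K) (x : ℝ), 0 < x → γt k ≤ x →
      f x / x ≤ f (Γ k) / Γ k := by
    intro k x hx hγx
    rcases eq_or_ne x (Γ k) with heq | hne
    · rw [heq]
    · exact (hkeylt k x hx hγx hne).le
  -- Part 2 : Nash equilibrium
  have hNE : IsNashEq K Pmax (dcUtil K N σ h f γt) p' := by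
    refine ⟨fun k => ⟨hp'pos k, hfeas' k⟩, ?_⟩
    intro k x hx
    have hI : 0 < N * σ ^ 2 + ∑ j ∈ univ.erase k, p' j * h j ^ 2 :=
      hIpos p' (fun j => (hp'pos j).le) k
    set c : ℝ := N * h k ^ 2 / (N * σ ^ 2 + ∑ j ∈ univ.erase k, p' j * h j ^ 2)
      with hcdef
    have hc : 0 < c := div_pos (mul_pos hN0 (pow_pos (hh k) 2)) hI
    have e1 : mfSIR K N σ h p' k = c * p' k := by
      unfold mfSIR; rw [hcdef]; ring
    have e2 : mfSIR K N σ h (Function.update p' k x) k = c * x := by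
      rw [hupd, hcdef]; ring
    have hcp : c * p' k = Γ k := by rw [← e1]; exact hsir1 k
    have hRHS : dcUtil K N σ h f γt p' k = c * (f (Γ k) / Γ k) := by
      simp only [dcUtil]
      rw [if_pos ⟨hp'pos k, by rw [hsir1 k]; exact hΓγt k⟩, hsir1 k]
      have hp'k : p' k = Γ k / c := by
        rw [← hcp]; field_simp
      rw [hp'k, div_div_eq_mul_div]
      ring
    rw [hRHS]
    simp only [dcUtil, Function.update_self, e2]
    split_ifs with hcond
    · have hx0 : 0 < x := hcond.1
      have hcx : 0 < c * x := mul_pos hc hx0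
      have h3 : f (c * x) / x = c * (f (c * x) / (c * x)) := by
        rw [← mul_div_assoc, mul_div_mul_left _ _ hc.ne']
      rw [h3]
      exact mul_le_mul_of_nonneg_left (hkey k (c * x) hcx hcond.2) hc.le
    · exact mul_nonneg hc.le (div_nonneg (hfΓ k).le (hΓpos k).le)
  refine ⟨fun k => hsir1 k, hNE, ?_⟩
  -- Part 3 : uniqueness
  intro q hqNE
  obtain ⟨hq1, hq2⟩ := hqNE
  have hqpos : ∀ j, 0 < q j := fun j => (hq1 j).1
  have hqle : ∀ j, q j ≤ Pmax := fun j => (hq1 j).2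
  set T : ℝ := ∑ j, q j * h j ^ 2 with hTdef
  have hIk : ∀ k, N * σ ^ 2 + ∑ j ∈ univ.erase k, q j * h j ^ 2
      = N * σ ^ 2 + T - q k * h k ^ 2 := by
    intro k
    rw [Finset.sum_erase_eq_sub (Finset.mem_univ k), hTdef]
    ring
  have hIkpos : ∀ k, 0 < N * σ ^ 2 + T - q k * h k ^ 2 := by
    intro k
    rw [← hIk k]
    exact hIpos q (fun j => (hqpos j).le) k
  have hsirq : ∀ k, mfSIR K N σ h q k
      = N * q k * h k ^ 2 / (N * σ ^ 2 + T - q k * h k ^ 2) := by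
    intro k; unfold mfSIR; rw [hIk k]
  -- Step A : dichotomy
  have dich : ∀ k, mfSIR K N σ h q k = Γ k ∨
      N * Pmax * h k ^ 2 < Γ k * (N * σ ^ 2 + T - q k * h k ^ 2) := by
    intro k
    by_cases hB : N * Pmax * h k ^ 2 < Γ k * (N * σ ^ 2 + T - q k * h k ^ 2)
    · exact Or.inr hB
    · left
      push_neg at hB
      set Ik : ℝ := N * σ ^ 2 + T - q k * h k ^ 2 with hIkdef
      have hIk0 : 0 < Ik := hIkpos k
      have hNh : 0 < N * h k ^ 2 := mul_pos hN0 (pow_pos (hh k) 2)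
      set q0 : ℝ := Γ k * Ik / (N * h k ^ 2) with hq0def
      have hq00 : 0 < q0 := div_pos (mul_pos (hΓpos k) hIk0) hNh
      have hq0le : q0 ≤ Pmax := by
        rw [hq0def, div_le_iff₀ hNh]
        calc Γ k * Ik ≤ N * Pmax * h k ^ 2 := hB
          _ = Pmax * (N * h k ^ 2) := by ring
      have hdev := hq2 k q0 ⟨hq00, hq0le⟩
      have eupd : mfSIR K N σ h (Function.update q k q0) k = Γ k := by
        rw [hupd, hIk k, ← hIkdef, hq0def]
        field_simp
        rw [mul_div_cancel_right₀ _ (hhne k)]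
      have hLHS : dcUtil K N σ h f γt (Function.update q k q0) k
          = f (Γ k) / q0 := by
        simp only [dcUtil, Function.update_self, eupd]
        rw [if_pos ⟨hq00, hΓγt k⟩]
      rw [hLHS] at hdev
      have hdevpos : 0 < f (Γ k) / q0 := div_pos (hfΓ k) hq00
      by_cases hcond : 0 < q k ∧ γt k ≤ mfSIR K N σ h q k
      · have hUq : dcUtil K N σ h f γt q k
            = f (mfSIR K N σ h q k) / q k := by
          simp only [dcUtil]; rw [if_pos hcond]
        rw [hUq] at hdev
        set γx := mfSIR K N σ h q k with hγxdef
        have hγxpos : 0 < γx := lt_of_lt_of_le (hγt k) hcond.2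
        by_contra hne
        have hlt := hkeylt k γx hγxpos hcond.2 hne
        -- translate both utilities through c = N h²/Ik
        set c : ℝ := N * h k ^ 2 / Ik with hcdef
        have hc : 0 < c := div_pos hNh hIk0
        have hγxc : γx = c * q k := by
          rw [hγxdef, hsirq k, ← hIkdef, hcdef]; ring
        have hΓc : Γ k = c * q0 := by
          rw [hq0def, hcdef]
          field_simp
          rw [mul_div_cancel_right₀ _ (hhne k)]
        have hqk' : q k = γx / c := by
          rw [hγxc]; field_simp
        have h1 : f γx / q k = c * (f γx / γx) := by
          rw [hqk', div_div_eq_mul_div]; ring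
        have hq0' : q0 = Γ k / c := by
          rw [hΓc]; field_simp
        have h2 : f (Γ k) / q0 = c * (f (Γ k) / Γ k) := by
          rw [hq0', div_div_eq_mul_div]; ring
        rw [h1, h2] at hdev
        have hmul := mul_lt_mul_of_pos_left hlt hc
        linarith [hdev, hmul]
      · have hUq : dcUtil K N σ h f γt q k = 0 := by
          simp only [dcUtil]; rw [if_neg hcond]
        rw [hUq] at hdev
        linarith
  -- algebraic consequences
  have hAeq : ∀ k, mfSIR K N σ h q k = Γ k →
      q k * h k ^ 2 = Γ k / (N + Γ k) * (N * σ ^ 2 + T) := by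
    intro k hk
    rw [hsirq k] at hk
    rw [div_eq_iff (ne_of_gt (hIkpos k))] at hk
    rw [div_mul_eq_mul_div, eq_div_iff (ne_of_gt (hNΓ k))]
    linear_combination hk
  have hBlt : ∀ k, N * Pmax * h k ^ 2 < Γ k * (N * σ ^ 2 + T - q k * h k ^ 2) →
      q k * h k ^ 2 < Γ k / (N + Γ k) * (N * σ ^ 2 + T) := by
    intro k hk
    have h1 : N * q k * h k ^ 2 ≤ N * Pmax * h k ^ 2 := by
      have := mul_le_mul_of_nonneg_left (hqle k) hN0.le
      nlinarith [sq_nonneg (h k), pow_pos (hh k) 2]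
    rw [div_mul_eq_mul_div, lt_div_iff₀ (hNΓ k)]
    nlinarith
  have hub : ∀ k, q k * h k ^ 2 ≤ Γ k / (N + Γ k) * (N * σ ^ 2 + T) := by
    intro k
    rcases dich k with hk | hk
    · exact (hAeq k hk).le
    · exact (hBlt k hk).le
  -- sum of slacks
  have hsumu : ∑ k, (Γ k / (N + Γ k) * (N * σ ^ 2 + T) - q k * h k ^ 2)
      = (1 - S) * (D - (N * σ ^ 2 + T)) := by
    rw [Finset.sum_sub_distrib, ← Finset.sum_mul, ← hSdef, ← hTdef]
    linear_combination hNσD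
  -- case split on whether some user fails
  by_cases hBs : ∀ k, mfSIR K N σ h q k = Γ k
  · -- all users hit their targets : unique solution
    have hzero : ∀ k, Γ k / (N + Γ k) * (N * σ ^ 2 + T) - q k * h k ^ 2 = 0 :=
      fun k => by rw [hAeq k (hBs k)]; ring
    have hsum0 : (1 - S) * (D - (N * σ ^ 2 + T)) = 0 := by
      rw [← hsumu]
      exact Finset.sum_eq_zero fun k _ => hzero k
    have hID : N * σ ^ 2 + T = D := by
      rcases mul_eq_zero.mp hsum0 with h1 | h1
      · exact absurd h1 (ne_of_gt hS0)
      · linarith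
    funext k
    have h1 : q k * h k ^ 2 = p' k * h k ^ 2 := by
      rw [hpt k]
      have := hAeq k (hBs k)
      rw [hID] at this
      exact this
    have h2 : (h k : ℝ) ^ 2 ≠ 0 := pow_ne_zero 2 (hhne k)
    exact mul_right_cancel₀ h2 h1
  · -- some user fails : contradiction
    exfalso
    push_neg at hBs
    obtain ⟨k0, hk0⟩ := hBs
    have hk0B : N * Pmax * h k0 ^ 2 < Γ k0 * (N * σ ^ 2 + T - q k0 * h k0 ^ 2) :=
      (dich k0).resolve_left hk0
    -- I' < D
    have hT_lt : T < S * (N * σ ^ 2 + T) := by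
      have h1 : ∑ k, q k * h k ^ 2 < ∑ k, Γ k / (N + Γ k) * (N * σ ^ 2 + T) :=
        Finset.sum_lt_sum (fun i _ => hub i)
          ⟨k0, Finset.mem_univ k0, hBlt k0 hk0B⟩
      rw [← hTdef] at h1
      rwa [← Finset.sum_mul, ← hSdef] at h1
    have hID : N * σ ^ 2 + T < D := by
      have h1 : (N * σ ^ 2 + T) * (1 - S) < N * σ ^ 2 := by nlinarith
      rw [hDdef, lt_div_iff₀ hS0]
      exact h1
    -- strict slack bound for failing users
    have hBstrict : ∀ k, N * Pmax * h k ^ 2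
          < Γ k * (N * σ ^ 2 + T - q k * h k ^ 2) →
        (D - (N * σ ^ 2 + T)) * (1 - Γ k / (N + Γ k))
          < Γ k / (N + Γ k) * (N * σ ^ 2 + T) - q k * h k ^ 2 := by
      intro k hk
      set s : ℝ := Γ k / (N + Γ k) with hsdef2
      have hs0 : 0 < s := hspos k
      have hΓs : s * (N + Γ k) = Γ k := by
        rw [hsdef2]; field_simp
        exact mul_div_cancel_right₀ _ (ne_of_gt (hNΓ k))
      have hNid : (1 - s) * (N + Γ k) = N := by
        rw [hsdef2]; field_simp
        rw [mul_sub, mul_one, mul_div_cancel₀ _ (ne_of_gt (hNΓ k))]; ring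
      have hA2 : s * D ≤ Pmax * h k ^ 2 := by
        have := mul_le_mul_of_nonneg_right (hfeas' k) (sq_nonneg (h k))
        rw [hpt k] at *
        nlinarith [hpt k]
      have h4 : N * (s * D) ≤ N * (Pmax * h k ^ 2) :=
        mul_le_mul_of_nonneg_left hA2 hN0.le
      have hsub : Γ k * (N * σ ^ 2 + T - q k * h k ^ 2)
          = s * ((N + Γ k) * (N * σ ^ 2 + T - q k * h k ^ 2)) := by
        linear_combination (-(N * σ ^ 2 + T - q k * h k ^ 2)) * hΓs
      have h5 : s * (N * D) < s * ((N + Γ k) * (N * σ ^ 2 + T - q k * h k ^ 2)) := by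
        rw [← hsub]
        calc s * (N * D) = N * (s * D) := by ring
          _ ≤ N * (Pmax * h k ^ 2) := h4
          _ = N * Pmax * h k ^ 2 := by ring
          _ < Γ k * (N * σ ^ 2 + T - q k * h k ^ 2) := hk
      have hND : N * D < (N + Γ k) * (N * σ ^ 2 + T - q k * h k ^ 2) :=
        lt_of_mul_lt_mul_left h5 hs0.le
      have hsub2 : D * (1 - s) * (N + Γ k) = D * N := by
        linear_combination D * hNid
      have h6 : D * (1 - s) * (N + Γ k)
          < (N * σ ^ 2 + T - q k * h k ^ 2) * (N + Γ k) := by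
        rw [hsub2]
        nlinarith [hND]
      have h7 : D * (1 - s) < N * σ ^ 2 + T - q k * h k ^ 2 :=
        lt_of_mul_lt_mul_right h6 (hNΓ k).le
      linarith [h7]
    -- split sum over failing / succeeding users
    set Bs : Finset (Fin K) :=
      univ.filter (fun k => ¬ mfSIR K N σ h q k = Γ k) with hBsdef
    have hk0mem : k0 ∈ Bs := by
      rw [hBsdef, Finset.mem_filter]
      exact ⟨Finset.mem_univ k0, hk0⟩
    have hsplit : ∑ k ∈ Bs, (Γ k / (N + Γ k) * (N * σ ^ 2 + T) - q k * h k ^ 2)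
        = (1 - S) * (D - (N * σ ^ 2 + T)) := by
      rw [← hsumu]
      apply Finset.sum_subset (Finset.subset_univ Bs)
      intro k _ hkn
      rw [hBsdef, Finset.mem_filter] at hkn
      push_neg at hkn
      have heq : mfSIR K N σ h q k = Γ k := hkn (Finset.mem_univ k)
      rw [hAeq k heq]; ring
    have hstrict : ∑ k ∈ Bs, (D - (N * σ ^ 2 + T)) * (1 - Γ k / (N + Γ k))
        < ∑ k ∈ Bs, (Γ k / (N + Γ k) * (N * σ ^ 2 + T) - q k * h k ^ 2) := by
      apply Finset.sum_lt_sum_of_nonempty ⟨k0, hk0mem⟩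
      intro k hkmem
      rw [hBsdef, Finset.mem_filter] at hkmem
      exact hBstrict k ((dich k).resolve_left hkmem.2)
    have hlower : (D - (N * σ ^ 2 + T)) * (1 - Γ k0 / (N + Γ k0))
        ≤ ∑ k ∈ Bs, (D - (N * σ ^ 2 + T)) * (1 - Γ k / (N + Γ k)) := by
      apply Finset.single_le_sum _ hk0mem
      intro i _
      exact mul_nonneg (by linarith) (by linarith [hs1 i])
    have hfinal : (D - (N * σ ^ 2 + T)) * (1 - Γ k0 / (N + Γ k0))
        < (1 - S) * (D - (N * σ ^ 2 + T)) := by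
      calc (D - (N * σ ^ 2 + T)) * (1 - Γ k0 / (N + Γ k0))
          ≤ ∑ k ∈ Bs, (D - (N * σ ^ 2 + T)) * (1 - Γ k / (N + Γ k)) := hlower
        _ < ∑ k ∈ Bs, (Γ k / (N + Γ k) * (N * σ ^ 2 + T) - q k * h k ^ 2) := hstrict
        _ = (1 - S) * (D - (N * σ ^ 2 + T)) := hsplit
    nlinarith [hsleS k0, hID, hfinal]
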